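/- Weighted Sobolev regularity implies weighted Hölder regularity of the Fourier transform: Let n ≥ 1, m ∈ ℕ with m ≥ 1, 0 < ε, and let V : ℝ² → M_n(ℂ) be of class C^m with (1+|x|²)^{ε/2} ∂^k V ∈ L¹(ℝ², M_n(ℂ)) for every multi-index k with |k| ≤ m. Set α = min(1, ε). Then ‖V̂‖_{α,m} < ∞, i.e. sup_{p ∈ ℝ²} (1+|p|²)^{m/2}|V̂(p)| < ∞ and sup_{p,ξ ∈ ℝ², 0<|ξ|≤1} |ξ|^{−α} |(1+|p+ξ|²)^{m/2} V̂(p+ξ) − (1+|p|²)^{m/2} V̂(p)| < ∞. -/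

import Mathlib

open Real Complex MeasureTheory

/-- Partial derivative `∂_j` of a function on `ℝ²` (realized as `Fin 2 → ℝ`). -/
noncomputable def pd (j : Fin 2) (f : (Fin 2 → ℝ) → ℂ) : (Fin 2 → ℝ) → ℂ :=
  fun x => fderiv ℝ f x (Pi.single j 1)

/-- Iterated partial derivative `∂^k = ∂₁^{k₁} ∂₂^{k₂}` for a multi-index `k = (k₁, k₂)`. -/
noncomputable def pdk (k : ℕ × ℕ) (f : (Fin 2 → ℝ) → ℂ) : (Fin 2 → ℝ) → ℂ :=
  (pd 0)^[k.1] ((pd 1)^[k.2] f)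

/-- The Fourier transform `V̂(p) = (1/(2π)²) ∫ e^{i p·x} V(x) dx`, taken entrywise. -/
noncomputable def ftMat {n : ℕ} (V : (Fin 2 → ℝ) → Matrix (Fin n) (Fin n) ℂ)
    (p : Fin 2 → ℝ) : Matrix (Fin n) (Fin n) ℂ :=
  fun i j => (1 / (2 * (π : ℂ)) ^ 2) *
    ∫ x : Fin 2 → ℝ, Complex.exp (Complex.I * ((p 0 * x 0 : ℝ) + (p 1 * x 1 : ℝ))) * V x i j

/-- The entrywise-max norm `|A| = max_{i,j} |A_{ij}|` on `Mₙ(ℂ)`. -/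
noncomputable def entryMax {n : ℕ} (A : Matrix (Fin n) (Fin n) ℂ) : ℝ :=
  ⨆ i : Fin n, ⨆ j : Fin n, ‖A i j‖

/-- The weight `(1 + |p|²)^{s/2}` on `ℝ²`. -/
noncomputable def wt (s : ℝ) (p : Fin 2 → ℝ) : ℝ :=
  (1 + (p 0) ^ 2 + (p 1) ^ 2) ^ (s / 2)

noncomputable def Ldot : (Fin 2 → ℝ) →L[ℝ] (Fin 2 → ℝ) →L[ℝ] ℝ :=
  LinearMap.mkContinuous₂
    (LinearMap.mk₂ ℝ (fun v w => v 0 * w 0 + v 1 * w 1)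
      (fun a b c => by simp; ring) (fun r a b => by simp; ring)
      (fun a b c => by simp; ring) (fun r a b => by simp; ring)) 2
    (fun v w => by
      have h0 : |v 0| ≤ ‖v‖ := norm_le_pi_norm v 0
      have h1 : |v 1| ≤ ‖v‖ := norm_le_pi_norm v 1
      have g0 : |w 0| ≤ ‖w‖ := norm_le_pi_norm w 0
      have g1 : |w 1| ≤ ‖w‖ := norm_le_pi_norm w 1
      simp only [LinearMap.mk₂_apply, Real.norm_eq_abs]
      calc |v 0 * w 0 + v 1 * w 1| ≤ |v 0| * |w 0| + |v 1| * |w 1| := by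
            refine (abs_add_le _ _).trans ?_; simp [abs_mul]
        _ ≤ 2 * ‖v‖ * ‖w‖ := by nlinarith [abs_nonneg (v 0), abs_nonneg (w 0), abs_nonneg (v 1), abs_nonneg (w 1), norm_nonneg v, norm_nonneg w])

@[simp] lemma Ldot_apply (v w : Fin 2 → ℝ) : Ldot v w = v 0 * w 0 + v 1 * w 1 := rfl

noncomputable def ker (p x : Fin 2 → ℝ) : ℂ :=
  Complex.exp (Complex.I * ((p 0 * x 0 : ℝ) + (p 1 * x 1 : ℝ)))

noncomputable def FI (g : (Fin 2 → ℝ) → ℂ) (p : Fin 2 → ℝ) : ℂ := ∫ x, ker p x * g x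

lemma ker_eq (p x : Fin 2 → ℝ) :
    ker p x = (Real.fourierChar (-(Ldot.toLinearMap₁₂ x ((-(2*π)⁻¹) • p))) : ℂ) := by
  rw [Real.fourierChar_apply, ker]
  have hπ : (π:ℝ) ≠ 0 := Real.pi_ne_zero
  have : (2 * π * -(Ldot.toLinearMap₁₂ x ((-(2*π)⁻¹) • p)) : ℝ) = p 0 * x 0 + p 1 * x 1 := by
    simp only [ContinuousLinearMap.toLinearMap₁₂_apply_apply_apply, Ldot_apply, Pi.smul_apply, smul_eq_mul]
    field_simp
    ring
  rw [this]
  push_cast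
  ring_nf

lemma FI_eq_fourierIntegral (g : (Fin 2 → ℝ) → ℂ) (p : Fin 2 → ℝ) :
    FI g p = VectorFourier.fourierIntegral Real.fourierChar volume Ldot.toLinearMap₁₂ g
      ((-(2*π)⁻¹) • p) := by
  rw [VectorFourier.fourierIntegral, FI]
  refine integral_congr_ae (Filter.Eventually.of_forall fun x => ?_)
  simp only [Circle.smul_def, ker_eq, smul_eq_mul]

lemma FI_pd (g : (Fin 2 → ℝ) → ℂ) (hg : Integrable g) (hdg : Differentiable ℝ g)
    (hfd : Integrable (fderiv ℝ g)) (a : Fin 2) (p : Fin 2 → ℝ) :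
    FI (pd a g) p = (-(Complex.I * (p a : ℝ))) * FI g p := by
  have key := VectorFourier.fourierIntegral_fderiv (L := Ldot) hg hdg hfd
  have h1 : FI (pd a g) p
      = (VectorFourier.fourierIntegral Real.fourierChar volume Ldot.toLinearMap₁₂ (fderiv ℝ g)
          ((-(2*π)⁻¹) • p)) (Pi.single a 1) := by
    rw [VectorFourier.fourierIntegral_continuousLinearMap_apply continuous_fourierChar hfd]
    exact FI_eq_fourierIntegral (pd a g) p
  rw [key, VectorFourier.fourierSMulRight_apply] at h1
  rw [FI_eq_fourierIntegral g p, h1]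
  have ha : ((-Ldot.flip) ((-(2*π)⁻¹) • p)) (Pi.single a 1) = (2*π)⁻¹ * p a := by
    simp only [ContinuousLinearMap.neg_apply, ContinuousLinearMap.flip_apply, Ldot_apply]
    fin_cases a <;> simp <;> ring
  rw [ha]
  set z := VectorFourier.fourierIntegral Real.fourierChar volume Ldot.toLinearMap₁₂ g ((-(2*π)⁻¹) • p)
  have hπ : (π:ℂ) ≠ 0 := by exact_mod_cast Real.pi_ne_zero
  push_cast [smul_eq_mul, Complex.real_smul]
  field_simp

lemma contDiff_pd {f : (Fin 2 → ℝ) → ℂ} {r : ℕ} (a : Fin 2) (h : ContDiff ℝ (r+1 : ℕ) f) :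
    ContDiff ℝ (r : ℕ) (pd a f) := by
  have h' : ContDiff ℝ (r : ℕ) (fderiv ℝ f) := by
    apply h.fderiv_right
    norm_cast
  exact (ContinuousLinearMap.apply ℝ ℂ (Pi.single a 1)).contDiff.comp h'

lemma contDiff_pd_iter (a : Fin 2) (l : ℕ) :
    ∀ (f : (Fin 2 → ℝ) → ℂ) (r : ℕ), ContDiff ℝ (l + r : ℕ) f →
      ContDiff ℝ (r : ℕ) ((pd a)^[l] f) := by
  induction l with
  | zero => intro f r h; simpa using h
  | succ l ih =>
    intro f r h
    rw [Function.iterate_succ_apply]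
    apply ih
    apply contDiff_pd
    have : (l + r + 1 : ℕ) = (l + 1 + r : ℕ) := by ring
    rw [this]; exact h

lemma diff_pd_iter {f : (Fin 2 → ℝ) → ℂ} (a : Fin 2) {l m : ℕ} (hl : l < m)
    (h : ContDiff ℝ (m : ℕ) f) : Differentiable ℝ ((pd a)^[l] f) := by
  have h1 : ContDiff ℝ (1 : ℕ) ((pd a)^[l] f) := by
    apply contDiff_pd_iter a l f 1
    exact h.of_le (by exact_mod_cast Nat.succ_le_of_lt hl)
  exact h1.differentiable (by norm_num)

lemma single_decomp (y : Fin 2 → ℝ) :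
    y = y 0 • (Pi.single 0 (1:ℝ) : Fin 2 → ℝ) + y 1 • (Pi.single 1 (1:ℝ) : Fin 2 → ℝ) := by
  funext i
  fin_cases i <;> simp

lemma opnorm_le_pd (L : (Fin 2 → ℝ) →L[ℝ] ℂ) :
    ‖L‖ ≤ ‖L (Pi.single 0 1)‖ + ‖L (Pi.single 1 1)‖ := by
  apply ContinuousLinearMap.opNorm_le_bound
  · positivity
  · intro y
    calc ‖L y‖ = ‖y 0 • L (Pi.single 0 1) + y 1 • L (Pi.single 1 1)‖ := by
          conv_lhs => rw [single_decomp y]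
          rw [map_add, L.map_smul, L.map_smul]
      _ ≤ ‖y 0 • L (Pi.single 0 1)‖ + ‖y 1 • L (Pi.single 1 1)‖ := norm_add_le _ _
      _ ≤ (‖L (Pi.single 0 1)‖ + ‖L (Pi.single 1 1)‖) * ‖y‖ := by
          rw [norm_smul, norm_smul]
          have h0 : ‖y 0‖ ≤ ‖y‖ := norm_le_pi_norm y 0
          have h1 : ‖y 1‖ ≤ ‖y‖ := norm_le_pi_norm y 1
          have n0 : (0:ℝ) ≤ ‖L (Pi.single 0 1)‖ := norm_nonneg _
          have n1 : (0:ℝ) ≤ ‖L (Pi.single 1 1)‖ := norm_nonneg _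
          have m0 : (0:ℝ) ≤ ‖y 0‖ := norm_nonneg _
          have m1 : (0:ℝ) ≤ ‖y 1‖ := norm_nonneg _
          nlinarith

lemma integrable_fderiv_of_pd {f : (Fin 2 → ℝ) → ℂ} (hc : Continuous (fderiv ℝ f))
    (h0 : Integrable (pd 0 f)) (h1 : Integrable (pd 1 f)) :
    Integrable (fderiv ℝ f) := by
  apply Integrable.mono' (h0.norm.add h1.norm) hc.aestronglyMeasurable
  filter_upwards with x
  exact opnorm_le_pd (fderiv ℝ f x)

lemma pd_comm {f : (Fin 2 → ℝ) → ℂ} (h : ContDiff ℝ (2:ℕ) f) (a b : Fin 2) :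
    pd b (pd a f) = pd a (pd b f) := by
  funext x
  have hdf : ∀ y, HasFDerivAt f (fderiv ℝ f y) y := fun y =>
    (h.differentiable (by norm_num) y).hasFDerivAt
  have h2 : ContDiff ℝ (1:ℕ) (fderiv ℝ f) := by
    apply h.fderiv_right; norm_cast
  have hA : HasFDerivAt (fderiv ℝ f) (fderiv ℝ (fderiv ℝ f) x) x :=
    (h2.differentiable (by norm_num) x).hasFDerivAt
  have symm := second_derivative_symmetric hdf hA (Pi.single a 1) (Pi.single b 1)
  have key : ∀ c d : Fin 2, pd d (pd c f) x
      = fderiv ℝ (fderiv ℝ f) x (Pi.single d 1) (Pi.single c 1) := by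
    intro c d
    have hcomp := (ContinuousLinearMap.apply ℝ ℂ (Pi.single c (1:ℝ))).hasFDerivAt.comp x hA
    have heq : pd c f = ⇑(ContinuousLinearMap.apply ℝ ℂ (Pi.single c (1:ℝ))) ∘ fderiv ℝ f := rfl
    show fderiv ℝ (pd c f) x (Pi.single d 1) = _
    rw [heq]
    rw [hcomp.fderiv]
    rfl
  rw [key a b, key b a, symm]

-- Cauchy-Schwarz in 2D
lemma cs2 (a0 a1 b0 b1 : ℝ) :
    |a0 * b0 + a1 * b1| ≤ Real.sqrt (a0^2 + a1^2) * Real.sqrt (b0^2 + b1^2) := by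
  have h : (a0 * b0 + a1 * b1)^2 ≤ (a0^2 + a1^2) * (b0^2 + b1^2) := by
    nlinarith [sq_nonneg (a0 * b1 - a1 * b0)]
  calc |a0 * b0 + a1 * b1| = Real.sqrt ((a0 * b0 + a1 * b1)^2) := (Real.sqrt_sq_eq_abs _).symm
    _ ≤ Real.sqrt ((a0^2 + a1^2) * (b0^2 + b1^2)) := Real.sqrt_le_sqrt h
    _ = Real.sqrt (a0^2 + a1^2) * Real.sqrt (b0^2 + b1^2) := Real.sqrt_mul (by positivity) _

lemma abs_pow_sub_pow (x y : ℝ) (mm : ℕ) :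
    |x^mm - y^mm| ≤ mm * (max |x| |y|)^(mm-1) * |x - y| := by
  have key := geom_sum₂_mul x y mm
  rw [← key, abs_mul]
  gcongr
  calc |∑ i ∈ Finset.range mm, x ^ i * y ^ (mm - 1 - i)|
      ≤ ∑ i ∈ Finset.range mm, |x ^ i * y ^ (mm - 1 - i)| := Finset.abs_sum_le_sum_abs _ _
    _ ≤ ∑ i ∈ Finset.range mm, (max |x| |y|)^(mm-1) := by
        apply Finset.sum_le_sum
        intro i hi
        rw [Finset.mem_range] at hi
        rw [abs_mul, _root_.abs_pow, _root_.abs_pow]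
        have h1 : |x|^i ≤ (max |x| |y|)^i := pow_le_pow_left₀ (abs_nonneg _) (le_max_left _ _) _
        have h2 : |y|^(mm-1-i) ≤ (max |x| |y|)^(mm-1-i) :=
          pow_le_pow_left₀ (abs_nonneg _) (le_max_right _ _) _
        calc |x|^i * |y|^(mm-1-i) ≤ (max |x| |y|)^i * (max |x| |y|)^(mm-1-i) := by
              apply mul_le_mul h1 h2 (by positivity) (by positivity)
          _ = (max |x| |y|)^(mm-1) := by
              rw [← pow_add]
              congr 1
              omega
    _ = mm * (max |x| |y|)^(mm-1) := by
        rw [Finset.sum_const, Finset.card_range, nsmul_eq_mul]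

-- wt as a natural power of sqrt
lemma wt_nat_eq (m : ℕ) (p : Fin 2 → ℝ) :
    wt m p = (Real.sqrt (1 + (p 0)^2 + (p 1)^2))^m := by
  rw [wt, Real.sqrt_eq_rpow, ← Real.rpow_natCast ((1 + (p 0)^2 + (p 1)^2) ^ ((1:ℝ)/2)) m,
    ← Real.rpow_mul (by positivity)]
  ring_nf

lemma wt_one_le {s : ℝ} (hs : 0 ≤ s) (p : Fin 2 → ℝ) : 1 ≤ wt s p := by
  rw [wt]
  apply Real.one_le_rpow (by nlinarith [sq_nonneg (p 0), sq_nonneg (p 1)]) (by positivity)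

lemma wt_pos {s : ℝ} (p : Fin 2 → ℝ) : 0 < wt s p := by
  rw [wt]
  apply Real.rpow_pos_of_pos
  nlinarith [sq_nonneg (p 0), sq_nonneg (p 1)]

lemma wt_le_sum_pow (m : ℕ) (p : Fin 2 → ℝ) :
    wt m p ≤ 3^m * (1 + |p 0|^m + |p 1|^m) := by
  set M := max 1 (max |p 0| |p 1|) with hM
  have hM1 : (1:ℝ) ≤ M := le_max_left _ _
  have hM0 : (0:ℝ) ≤ M := by linarith
  have h1 : Real.sqrt (1 + (p 0)^2 + (p 1)^2) ≤ 3 * M := by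
    rw [show (3*M : ℝ) = Real.sqrt ((3*M)^2) by rw [Real.sqrt_sq (by positivity)]]
    apply Real.sqrt_le_sqrt
    have e0 : |p 0| ≤ M := le_trans (le_max_left _ _) (le_max_right _ _)
    have e1 : |p 1| ≤ M := le_trans (le_max_right _ _) (le_max_right _ _)
    have f0 : (p 0)^2 ≤ M^2 := by rw [← _root_.sq_abs]; exact pow_le_pow_left₀ (abs_nonneg _) e0 2
    have f1 : (p 1)^2 ≤ M^2 := by rw [← _root_.sq_abs]; exact pow_le_pow_left₀ (abs_nonneg _) e1 2
    nlinarith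
  have h2 : M^m ≤ 1 + |p 0|^m + |p 1|^m := by
    have n0 : (0:ℝ) ≤ |p 0|^m := by positivity
    have n1 : (0:ℝ) ≤ |p 1|^m := by positivity
    have none : (0:ℝ) ≤ (1:ℝ)^m := by positivity
    rcases max_choice (1:ℝ) (max |p 0| |p 1|) with h | h
    · rw [hM, h]; simp; linarith
    · rcases max_choice (|p 0|) (|p 1|) with h' | h' <;> rw [hM, h, h'] <;> linarith
  calc wt m p = (Real.sqrt (1 + (p 0)^2 + (p 1)^2))^m := wt_nat_eq m p
    _ ≤ (3*M)^m := pow_le_pow_left₀ (Real.sqrt_nonneg _) h1 m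
    _ = 3^m * M^m := mul_pow 3 M m
    _ ≤ 3^m * (1 + |p 0|^m + |p 1|^m) := by
        apply mul_le_mul_of_nonneg_left h2 (by positivity)

lemma wtdiff_real {m : ℕ} (hm : 1 ≤ m) {s u v : ℝ} (hs0 : 0 ≤ s) (hs1 : s ≤ 1)
    (hu1 : 1 ≤ u) (hv1 : 1 ≤ v) (hvu : |v - u| ≤ 3 * s * Real.sqrt u) :
    |(Real.sqrt v)^m - (Real.sqrt u)^m| ≤ 2*m*6^m*s*(Real.sqrt v)^m := by
  have hsqu : (1:ℝ) ≤ Real.sqrt u := by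
    rw [show (1:ℝ) = Real.sqrt 1 by simp]; exact Real.sqrt_le_sqrt hu1
  have hsqv : (1:ℝ) ≤ Real.sqrt v := by
    rw [show (1:ℝ) = Real.sqrt 1 by simp]; exact Real.sqrt_le_sqrt hv1
  have husq : (Real.sqrt u)^2 = u := Real.sq_sqrt (by linarith)
  have hvsq : (Real.sqrt v)^2 = v := Real.sq_sqrt (by linarith)
  have humax : u ≤ 36 * v := by
    have h4 : u - v ≤ 3 * Real.sqrt u := by
      have h5 : u - v ≤ |v - u| := by rw [abs_sub_comm]; exact le_abs_self _
      have h6 : 3 * s * Real.sqrt u ≤ 3 * Real.sqrt u := by nlinarith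
      linarith
    nlinarith [sq_nonneg (Real.sqrt u - 6)]
  have hsquv : Real.sqrt u ≤ 6 * Real.sqrt v := by
    calc Real.sqrt u ≤ Real.sqrt (36 * v) := Real.sqrt_le_sqrt humax
      _ = 6 * Real.sqrt v := by
          rw [show (36 * v : ℝ) = (6*Real.sqrt v)^2 by nlinarith, Real.sqrt_sq (by positivity)]
  have hdiff : |Real.sqrt v - Real.sqrt u| ≤ 3/2 * s * Real.sqrt u := by
    have hid : |Real.sqrt v - Real.sqrt u| * (Real.sqrt v + Real.sqrt u) = |v - u| := by
      rw [← _root_.abs_of_nonneg (show (0:ℝ) ≤ Real.sqrt v + Real.sqrt u by positivity),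
        ← _root_.abs_mul]
      congr 1; nlinarith
    nlinarith [abs_nonneg (Real.sqrt v - Real.sqrt u)]
  have hmaxle : max |Real.sqrt v| |Real.sqrt u| ≤ 6 * Real.sqrt v := by
    rw [_root_.abs_of_nonneg (Real.sqrt_nonneg v), _root_.abs_of_nonneg (Real.sqrt_nonneg u)]
    apply max_le _ hsquv
    nlinarith
  have hpow : (6*Real.sqrt v)^(m-1)*(6*Real.sqrt v) = (6*Real.sqrt v)^m := by
    rw [← pow_succ]; congr 1; omega
  have h6 : (6*Real.sqrt v)^m = 6^m * (Real.sqrt v)^m := mul_pow _ _ _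
  calc |(Real.sqrt v)^m - (Real.sqrt u)^m|
      ≤ m * (max |Real.sqrt v| |Real.sqrt u|)^(m-1) * |Real.sqrt v - Real.sqrt u| :=
        abs_pow_sub_pow _ _ m
    _ ≤ m * (6*Real.sqrt v)^(m-1) * (3/2 * s * Real.sqrt u) := by
        apply mul_le_mul _ hdiff (abs_nonneg _) (by positivity)
        apply mul_le_mul_of_nonneg_left _ (by positivity)
        exact pow_le_pow_left₀ (by positivity) hmaxle _
    _ ≤ m * (6*Real.sqrt v)^(m-1) * (3/2 * s * (6*Real.sqrt v)) := by
        apply mul_le_mul_of_nonneg_left _ (by positivity)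
        have h7 := mul_le_mul_of_nonneg_left hsquv (show (0:ℝ) ≤ 3/2*s by positivity)
        nlinarith
    _ = 3/2 * m * s * ((6*Real.sqrt v)^(m-1) * (6*Real.sqrt v)) := by ring
    _ = 3/2 * m * s * (6^m * (Real.sqrt v)^m) := by rw [hpow, h6]
    _ ≤ 2*m*6^m*s*(Real.sqrt v)^m := by
        have : (0:ℝ) ≤ (m:ℝ) * s * (6^m * (Real.sqrt v)^m) := by positivity
        nlinarith

lemma wt_diff {m : ℕ} (hm : 1 ≤ m) (p ξ : Fin 2 → ℝ)
    (hs1 : Real.sqrt ((ξ 0)^2 + (ξ 1)^2) ≤ 1) :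
    |wt m (p+ξ) - wt m p| ≤ 2*m*6^m*Real.sqrt ((ξ 0)^2 + (ξ 1)^2) * wt m (p+ξ) := by
  have e0 : (p+ξ) 0 = p 0 + ξ 0 := rfl
  have e1 : (p+ξ) 1 = p 1 + ξ 1 := rfl
  have hs0 : 0 ≤ Real.sqrt ((ξ 0)^2 + (ξ 1)^2) := Real.sqrt_nonneg _
  set s := Real.sqrt ((ξ 0)^2 + (ξ 1)^2) with hsdef
  have hu1 : (1:ℝ) ≤ 1 + (p 0)^2 + (p 1)^2 := by nlinarith [sq_nonneg (p 0), sq_nonneg (p 1)]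
  have hv1 : (1:ℝ) ≤ 1 + ((p+ξ) 0)^2 + ((p+ξ) 1)^2 := by
    nlinarith [sq_nonneg ((p+ξ) 0), sq_nonneg ((p+ξ) 1)]
  have hsq : s^2 = (ξ 0)^2 + (ξ 1)^2 := Real.sq_sqrt (by positivity)
  have hsqu : (1:ℝ) ≤ Real.sqrt (1 + (p 0)^2 + (p 1)^2) := by
    have h := Real.sqrt_le_sqrt hu1; rwa [Real.sqrt_one] at h
  have hpu : Real.sqrt ((p 0)^2 + (p 1)^2) ≤ Real.sqrt (1 + (p 0)^2 + (p 1)^2) := by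
    apply Real.sqrt_le_sqrt; nlinarith
  have hvu : |(1 + ((p+ξ) 0)^2 + ((p+ξ) 1)^2) - (1 + (p 0)^2 + (p 1)^2)|
      ≤ 3 * s * Real.sqrt (1 + (p 0)^2 + (p 1)^2) := by
    have hcs : |p 0 * ξ 0 + p 1 * ξ 1| ≤ Real.sqrt ((p 0)^2 + (p 1)^2) * s := cs2 _ _ _ _
    have hexp : (1 + ((p+ξ) 0)^2 + ((p+ξ) 1)^2) - (1 + (p 0)^2 + (p 1)^2)
        = 2 * (p 0 * ξ 0 + p 1 * ξ 1) + ((ξ 0)^2 + (ξ 1)^2) := by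
      rw [e0, e1]; ring
    rw [hexp]
    have h2 : |2 * (p 0 * ξ 0 + p 1 * ξ 1)| ≤ 2 * (Real.sqrt (1 + (p 0)^2 + (p 1)^2) * s) := by
      rw [_root_.abs_mul, _root_.abs_two]
      have := hcs.trans (mul_le_mul_of_nonneg_right hpu hs0)
      linarith
    have h3 : (ξ 0)^2 + (ξ 1)^2 ≤ s * Real.sqrt (1 + (p 0)^2 + (p 1)^2) := by
      rw [← hsq]; nlinarith
    calc |2 * (p 0 * ξ 0 + p 1 * ξ 1) + ((ξ 0)^2 + (ξ 1)^2)|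
        ≤ |2 * (p 0 * ξ 0 + p 1 * ξ 1)| + |(ξ 0)^2 + (ξ 1)^2| := abs_add_le _ _
      _ ≤ 2 * (Real.sqrt (1 + (p 0)^2 + (p 1)^2) * s) + s * Real.sqrt (1 + (p 0)^2 + (p 1)^2) := by
          rw [_root_.abs_of_nonneg (show (0:ℝ) ≤ (ξ 0)^2 + (ξ 1)^2 by positivity)]
          linarith
      _ = 3 * s * Real.sqrt (1 + (p 0)^2 + (p 1)^2) := by ring
  have key := wtdiff_real hm hs0 hs1 hu1 hv1 hvu
  rw [wt_nat_eq, wt_nat_eq]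
  exact key

lemma ker_abs (p x : Fin 2 → ℝ) : ‖ker p x‖ = 1 := by
  rw [ker, Complex.norm_exp]
  have : (Complex.I * ((p 0 * x 0 : ℝ) + (p 1 * x 1 : ℝ))).re = 0 := by
    simp [Complex.mul_re]
  rw [this, Real.exp_zero]

lemma ker_continuous (p : Fin 2 → ℝ) : Continuous (ker p) := by
  apply Complex.continuous_exp.comp
  apply Continuous.mul continuous_const
  apply Continuous.add <;>
  · apply Complex.continuous_ofReal.comp
    fun_prop

lemma integrable_ker_mul {g : (Fin 2 → ℝ) → ℂ} (hg : Integrable g) (p : Fin 2 → ℝ) :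
    Integrable (fun x => ker p x * g x) := by
  apply Integrable.bdd_mul (c := 1) hg (ker_continuous p).aestronglyMeasurable
  exact Filter.Eventually.of_forall (fun x => (ker_abs _ x).le)

lemma FI_norm_le {g : (Fin 2 → ℝ) → ℂ} (hg : Integrable g) (p : Fin 2 → ℝ) :
    ‖FI g p‖ ≤ ∫ x, ‖g x‖ := by
  rw [FI]
  refine (norm_integral_le_integral_norm _).trans ?_
  apply le_of_eq
  congr 1 with x
  rw [norm_mul, ker_abs, one_mul]

lemma ker_add (p ξ x : Fin 2 → ℝ) : ker (p + ξ) x = ker p x * ker ξ x := by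
  rw [ker, ker, ker, ← Complex.exp_add]
  congr 1
  have e0 : (p+ξ) 0 = p 0 + ξ 0 := rfl
  have e1 : (p+ξ) 1 = p 1 + ξ 1 := rfl
  rw [e0, e1]
  push_cast
  ring

lemma FI_shift (g : (Fin 2 → ℝ) → ℂ) (p ξ : Fin 2 → ℝ) :
    FI (fun x => ker ξ x * g x) p = FI g (p + ξ) := by
  rw [FI, FI]
  congr 1 with x
  rw [ker_add]
  ring

lemma FI_phi (g : (Fin 2 → ℝ) → ℂ) (hg : Integrable g) (p ξ : Fin 2 → ℝ) :
    FI (fun x => (ker ξ x - 1) * g x) p = FI g (p + ξ) - FI g p := by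
  have h1 : (fun x => ker p x * ((ker ξ x - 1) * g x))
      = fun x => ker p x * (ker ξ x * g x) - ker p x * g x := by
    funext x; ring
  rw [FI, h1, integral_sub (integrable_ker_mul (by
      apply Integrable.bdd_mul (c := 1) hg (ker_continuous ξ).aestronglyMeasurable
      exact Filter.Eventually.of_forall (fun x => (ker_abs _ x).le)) p)
    (integrable_ker_mul hg p), ← FI, ← FI, FI_shift]

lemma phi_abs_le {ξ x : Fin 2 → ℝ} {ε α : ℝ} (hε : 0 < ε) (hα : α = min 1 ε)
    (hs1 : Real.sqrt ((ξ 0)^2 + (ξ 1)^2) ≤ 1) (hs0 : 0 < Real.sqrt ((ξ 0)^2 + (ξ 1)^2)) :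
    ‖ker ξ x - 1‖ ≤ 2 * (Real.sqrt ((ξ 0)^2 + (ξ 1)^2))^α * wt ε x := by
  set s := Real.sqrt ((ξ 0)^2 + (ξ 1)^2) with hsdef
  have hα0 : 0 < α := by rw [hα]; exact lt_min one_pos hε
  have hα1 : α ≤ 1 := by rw [hα]; exact min_le_left _ _
  have hαε : α ≤ ε := by rw [hα]; exact min_le_right _ _
  set Q := 1 + (x 0)^2 + (x 1)^2 with hQ
  have hQ1 : (1:ℝ) ≤ Q := by nlinarith [sq_nonneg (x 0), sq_nonneg (x 1)]
  have hQ0 : (0:ℝ) ≤ Q := by linarith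
  have hsqQ : (1:ℝ) ≤ Real.sqrt Q := by
    have h := Real.sqrt_le_sqrt hQ1; rwa [Real.sqrt_one] at h
  set t := s * Real.sqrt Q with ht
  have ht0 : 0 < t := by positivity
  have hθ : |ξ 0 * x 0 + ξ 1 * x 1| ≤ t := by
    refine (cs2 _ _ _ _).trans ?_
    rw [ht]
    apply mul_le_mul_of_nonneg_left _ (le_of_lt hs0)
    apply Real.sqrt_le_sqrt; linarith
  have htQ : t^α ≤ s^α * wt ε x := by
    rw [ht, Real.mul_rpow (le_of_lt hs0) (Real.sqrt_nonneg _)]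
    apply mul_le_mul_of_nonneg_left _ (Real.rpow_nonneg (le_of_lt hs0) α)
    rw [Real.sqrt_eq_rpow, ← Real.rpow_mul hQ0, wt]
    exact Real.rpow_le_rpow_of_exponent_le hQ1 (by linarith)
  have hker : ker ξ x = Complex.exp (Complex.I * ((ξ 0 * x 0 + ξ 1 * x 1 : ℝ) : ℂ)) := by
    rw [ker]; congr 1; push_cast; ring
  have hz : ‖Complex.I * ((ξ 0 * x 0 + ξ 1 * x 1 : ℝ):ℂ)‖
      = |ξ 0 * x 0 + ξ 1 * x 1| := by
    rw [norm_mul, Complex.norm_I, one_mul, Complex.norm_real, Real.norm_eq_abs]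
  rcases le_or_gt t 1 with h | h
  · have h2 : ‖ker ξ x - 1‖
        ≤ 2 * ‖Complex.I * ((ξ 0 * x 0 + ξ 1 * x 1 : ℝ):ℂ)‖ := by
      rw [hker]
      exact Complex.norm_exp_sub_one_le (by rw [hz]; exact hθ.trans h)
    have h3 : t ≤ t^α := by
      have h4 := Real.rpow_le_rpow_of_exponent_ge ht0 h hα1
      rwa [Real.rpow_one] at h4
    rw [hz] at h2
    calc ‖ker ξ x - 1‖ ≤ 2 * |ξ 0 * x 0 + ξ 1 * x 1| := h2
      _ ≤ 2 * t := by linarith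
      _ ≤ 2 * t^α := by linarith
      _ ≤ 2 * (s^α * wt ε x) := by linarith
      _ = 2 * s^α * wt ε x := by ring
  · have h2 : ‖ker ξ x - 1‖ ≤ 2 := by
      calc ‖ker ξ x - 1‖ = ‖ker ξ x - 1‖ := rfl
        _ ≤ ‖ker ξ x‖ + ‖(1:ℂ)‖ := norm_sub_le _ _
        _ = 2 := by rw [ker_abs]; norm_num
    have h3 : (1:ℝ) ≤ t^α := by
      have h4 := Real.rpow_le_rpow_of_exponent_le (le_of_lt h) (le_of_lt hα0 : (0:ℝ) ≤ α)
      rwa [Real.rpow_zero] at h4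
    calc ‖ker ξ x - 1‖ ≤ 2 := h2
      _ ≤ 2 * t^α := by linarith
      _ ≤ 2 * (s^α * wt ε x) := by linarith
      _ = 2 * s^α * wt ε x := by ring

lemma pd1_iter_pd0 (l : ℕ) :
    ∀ f : (Fin 2 → ℝ) → ℂ, ContDiff ℝ (l+1 : ℕ) f →
      pd 1 ((pd 0)^[l] f) = (pd 0)^[l] (pd 1 f) := by
  induction l with
  | zero => intro f _; simp
  | succ l ih =>
    intro f hf
    rw [Function.iterate_succ_apply]
    rw [ih (pd 0 f) (contDiff_pd 0 (by exact_mod_cast hf))]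
    rw [pd_comm (hf.of_le (Nat.cast_le.mpr (by omega))) 0 1]
    rw [← Function.iterate_succ_apply]

lemma FI_iter (a : Fin 2) {m : ℕ} (h : (Fin 2 → ℝ) → ℂ) (hsm : ContDiff ℝ (m:ℕ) h)
    (hI : ∀ l, l ≤ m → Integrable ((pd a)^[l] h))
    (hF : ∀ l, l < m → Integrable (fderiv ℝ ((pd a)^[l] h))) :
    ∀ l, l ≤ m → ∀ p, FI ((pd a)^[l] h) p = (-(Complex.I * (p a : ℝ)))^l * FI h p := by
  intro l
  induction l with
  | zero => intro _ p; simp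
  | succ l ih =>
    intro hl p
    have e : (pd a)^[l+1] h = pd a ((pd a)^[l] h) := Function.iterate_succ_apply' _ _ _
    rw [e, FI_pd _ (hI l (by omega)) (diff_pd_iter a (by omega) hsm) (hF l (by omega)),
      ih (by omega) p]
    ring

lemma FI_le_w {ε : ℝ} (hε : 0 < ε) {g : (Fin 2 → ℝ) → ℂ} (hg : Integrable g)
    (hw : Integrable (fun x => wt ε x * ‖g x‖)) (p : Fin 2 → ℝ) :
    ‖FI g p‖ ≤ ∫ x, wt ε x * ‖g x‖ := by
  refine (FI_norm_le hg p).trans ?_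
  apply integral_mono hg.norm hw
  intro x
  exact le_mul_of_one_le_left (norm_nonneg _) (wt_one_le (le_of_lt hε) x)

lemma prov_hI0 {m : ℕ} {f : (Fin 2 → ℝ) → ℂ}
    (hIk : ∀ k : ℕ×ℕ, k.1+k.2 ≤ m → Integrable (pdk k f)) :
    ∀ l, l ≤ m → Integrable ((pd 0)^[l] f) :=
  fun l hl => hIk (l,0) (by omega)

lemma prov_hI1 {m : ℕ} {f : (Fin 2 → ℝ) → ℂ}
    (hIk : ∀ k : ℕ×ℕ, k.1+k.2 ≤ m → Integrable (pdk k f)) :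
    ∀ l, l ≤ m → Integrable ((pd 1)^[l] f) :=
  fun l hl => hIk (0,l) (by omega)

lemma prov_hF0 {m : ℕ} {f : (Fin 2 → ℝ) → ℂ} (hsm : ContDiff ℝ (m:ℕ) f)
    (hIk : ∀ k : ℕ×ℕ, k.1+k.2 ≤ m → Integrable (pdk k f)) :
    ∀ l, l < m → Integrable (fderiv ℝ ((pd 0)^[l] f)) := by
  intro l hl
  apply integrable_fderiv_of_pd
  · have h1 : ContDiff ℝ ((1:ℕ) : ℕ∞) ((pd 0)^[l] f) :=
      contDiff_pd_iter 0 l f 1 (hsm.of_le (Nat.cast_le.mpr (by omega)))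
    exact h1.continuous_fderiv (by norm_num)
  · have e := Function.iterate_succ_apply' (pd 0) l f
    rw [← e]
    exact hIk (l+1,0) (by omega)
  · rw [pd1_iter_pd0 l f (hsm.of_le (Nat.cast_le.mpr (by omega)))]
    exact hIk (l,1) (by omega)

lemma prov_hF1 {m : ℕ} {f : (Fin 2 → ℝ) → ℂ} (hsm : ContDiff ℝ (m:ℕ) f)
    (hIk : ∀ k : ℕ×ℕ, k.1+k.2 ≤ m → Integrable (pdk k f)) :
    ∀ l, l < m → Integrable (fderiv ℝ ((pd 1)^[l] f)) := by
  intro l hl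
  apply integrable_fderiv_of_pd
  · have h1 : ContDiff ℝ ((1:ℕ) : ℕ∞) ((pd 1)^[l] f) :=
      contDiff_pd_iter 1 l f 1 (hsm.of_le (Nat.cast_le.mpr (by omega)))
    exact h1.continuous_fderiv (by norm_num)
  · exact hIk (1,l) (by omega)
  · have e := Function.iterate_succ_apply' (pd 1) l f
    rw [← e]
    exact hIk (0,l+1) (by omega)

lemma abs_FI_iter {m : ℕ} {f : (Fin 2 → ℝ) → ℂ} (hsm : ContDiff ℝ (m:ℕ) f)
    (hIk : ∀ k : ℕ×ℕ, k.1+k.2 ≤ m → Integrable (pdk k f)) (a : Fin 2) (p : Fin 2 → ℝ) :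
    ‖FI ((pd a)^[m] f) p‖ = |p a|^m * ‖FI f p‖ := by
  have key : FI ((pd a)^[m] f) p = (-(Complex.I * (p a : ℝ)))^m * FI f p := by
    fin_cases a
    · exact FI_iter 0 f hsm (prov_hI0 hIk) (prov_hF0 hsm hIk) m le_rfl p
    · exact FI_iter 1 f hsm (prov_hI1 hIk) (prov_hF1 hsm hIk) m le_rfl p
  rw [key, norm_mul, norm_pow, norm_neg, norm_mul, Complex.norm_I, one_mul,
    Complex.norm_real, Real.norm_eq_abs]

lemma FI_decay {m : ℕ} (hm : 1 ≤ m) {ε : ℝ} (hε : 0 < ε) (f : (Fin 2 → ℝ) → ℂ)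
    (hsm : ContDiff ℝ (m:ℕ) f)
    (hIk : ∀ k : ℕ×ℕ, k.1+k.2 ≤ m → Integrable (pdk k f))
    (hIw : ∀ k : ℕ×ℕ, k.1+k.2 ≤ m → Integrable (fun x => wt ε x * ‖pdk k f x‖))
    (p : Fin 2 → ℝ) :
    wt m p * ‖FI f p‖
      ≤ 3^m * ((∫ x, wt ε x * ‖pdk (0,0) f x‖) + (∫ x, wt ε x * ‖pdk (m,0) f x‖)
          + (∫ x, wt ε x * ‖pdk (0,m) f x‖)) := by
  have h1 : ‖FI f p‖ ≤ ∫ x, wt ε x * ‖pdk (0,0) f x‖ :=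
    FI_le_w hε (hIk (0,0) (by omega)) (hIw (0,0) (by omega)) p
  have h2 : |p 0|^m * ‖FI f p‖ ≤ ∫ x, wt ε x * ‖pdk (m,0) f x‖ := by
    rw [← abs_FI_iter hsm hIk 0 p]
    exact FI_le_w hε (hIk (m,0) (by omega)) (hIw (m,0) (by omega)) p
  have h3 : |p 1|^m * ‖FI f p‖ ≤ ∫ x, wt ε x * ‖pdk (0,m) f x‖ := by
    rw [← abs_FI_iter hsm hIk 1 p]
    exact FI_le_w hε (hIk (0,m) (by omega)) (hIw (0,m) (by omega)) p
  have hA : (0:ℝ) ≤ ‖FI f p‖ := norm_nonneg _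
  calc wt m p * ‖FI f p‖
      ≤ (3^m * (1 + |p 0|^m + |p 1|^m)) * ‖FI f p‖ :=
        mul_le_mul_of_nonneg_right (wt_le_sum_pow m p) hA
    _ = 3^m * (‖FI f p‖ + |p 0|^m * ‖FI f p‖
          + |p 1|^m * ‖FI f p‖) := by ring
    _ ≤ 3^m * ((∫ x, wt ε x * ‖pdk (0,0) f x‖) + (∫ x, wt ε x * ‖pdk (m,0) f x‖)
          + (∫ x, wt ε x * ‖pdk (0,m) f x‖)) := by
        apply mul_le_mul_of_nonneg_left _ (by positivity)
        linarith

lemma fin2 (a : Fin 2) : a = 0 ∨ a = 1 := by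
  fin_cases a
  · exact Or.inl rfl
  · exact Or.inr rfl

lemma sq_le_sum2 (ξ : Fin 2 → ℝ) (a : Fin 2) : (ξ a)^2 ≤ (ξ 0)^2 + (ξ 1)^2 := by
  rcases fin2 a with rfl | rfl
  · nlinarith [sq_nonneg (ξ 1)]
  · nlinarith [sq_nonneg (ξ 0)]

lemma FI_phig_le {ε α : ℝ} (hε : 0 < ε) (hα : α = min 1 ε) {ξ : Fin 2 → ℝ}
    (hs1 : Real.sqrt ((ξ 0)^2 + (ξ 1)^2) ≤ 1) (hs0 : 0 < Real.sqrt ((ξ 0)^2 + (ξ 1)^2))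
    (g : (Fin 2 → ℝ) → ℂ) (hIwg : Integrable (fun x => wt ε x * ‖g x‖)) (p : Fin 2 → ℝ) :
    ‖FI (fun x => (ker ξ x - 1) * g x) p‖
      ≤ 2 * (Real.sqrt ((ξ 0)^2 + (ξ 1)^2))^α * ∫ x, wt ε x * ‖g x‖ := by
  set s := Real.sqrt ((ξ 0)^2 + (ξ 1)^2) with hs
  rw [FI]
  have hb : ∀ᵐ x : Fin 2 → ℝ, ‖ker p x * ((ker ξ x - 1) * g x)‖
      ≤ 2 * s^α * (wt ε x * ‖g x‖) := by
    filter_upwards with x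
    rw [norm_mul, norm_mul, ker_abs, one_mul]
    calc ‖ker ξ x - 1‖ * ‖g x‖ ≤ (2 * s^α * wt ε x) * ‖g x‖ :=
          mul_le_mul_of_nonneg_right (phi_abs_le hε hα hs1 hs0) (norm_nonneg _)
      _ = 2 * s^α * (wt ε x * ‖g x‖) := by ring
  refine (norm_integral_le_of_norm_le (hIwg.const_mul (2*s^α)) hb).trans ?_
  rw [integral_const_mul]

lemma prov_hIa {m : ℕ} {f : (Fin 2 → ℝ) → ℂ}
    (hIk : ∀ k : ℕ×ℕ, k.1+k.2 ≤ m → Integrable (pdk k f)) (a : Fin 2) :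
    ∀ l, l ≤ m → Integrable ((pd a)^[l] f) := by
  rcases fin2 a with rfl | rfl
  · exact prov_hI0 hIk
  · exact prov_hI1 hIk

lemma FI_iter_a {m : ℕ} {f : (Fin 2 → ℝ) → ℂ} (hsm : ContDiff ℝ (m:ℕ) f)
    (hIk : ∀ k : ℕ×ℕ, k.1+k.2 ≤ m → Integrable (pdk k f)) (a : Fin 2) (r : Fin 2 → ℝ) :
    FI ((pd a)^[m] f) r = (-(Complex.I * (r a : ℝ)))^m * FI f r := by
  rcases fin2 a with rfl | rfl
  · exact FI_iter 0 f hsm (prov_hI0 hIk) (prov_hF0 hsm hIk) m le_rfl r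
  · exact FI_iter 1 f hsm (prov_hI1 hIk) (prov_hF1 hsm hIk) m le_rfl r

lemma hIwa_of {m : ℕ} {ε : ℝ} {f : (Fin 2 → ℝ) → ℂ}
    (hIw : ∀ k : ℕ×ℕ, k.1+k.2 ≤ m → Integrable (fun x => wt ε x * ‖pdk k f x‖)) (a : Fin 2) :
    Integrable (fun x => wt ε x * ‖(pd a)^[m] f x‖) := by
  rcases fin2 a with rfl | rfl
  · exact hIw (m,0) (by omega)
  · exact hIw (0,m) (by omega)

lemma axis_bound {m : ℕ} (hm : 1 ≤ m) {ε α : ℝ} (hε : 0 < ε) (hα : α = min 1 ε)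
    (f : (Fin 2 → ℝ) → ℂ) (hsm : ContDiff ℝ (m:ℕ) f)
    (hIk : ∀ k : ℕ×ℕ, k.1+k.2 ≤ m → Integrable (pdk k f))
    (hIw : ∀ k : ℕ×ℕ, k.1+k.2 ≤ m → Integrable (fun x => wt ε x * ‖pdk k f x‖))
    (p ξ : Fin 2 → ℝ)
    (hs0 : 0 < Real.sqrt ((ξ 0)^2 + (ξ 1)^2)) (hs1 : Real.sqrt ((ξ 0)^2 + (ξ 1)^2) ≤ 1)
    {CA : ℝ} (hCAn : 0 ≤ CA)
    (hdecq : wt m (p+ξ) * ‖FI f (p+ξ)‖ ≤ CA) (a : Fin 2) :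
    |p a|^m * ‖FI f (p+ξ) - FI f p‖
      ≤ (Real.sqrt ((ξ 0)^2 + (ξ 1)^2))^α
          * (m*2^m*CA + 2*(∫ x, wt ε x * ‖(pd a)^[m] f x‖)) := by
  set s := Real.sqrt ((ξ 0)^2 + (ξ 1)^2) with hs
  have hα0 : 0 < α := by rw [hα]; exact lt_min one_pos hε
  have hα1 : α ≤ 1 := by rw [hα]; exact min_le_left _ _
  have hssα : s ≤ s^α := by
    have h := Real.rpow_le_rpow_of_exponent_ge hs0 hs1 hα1
    rwa [Real.rpow_one] at h
  have hWan : (0:ℝ) ≤ ∫ x, wt ε x * ‖(pd a)^[m] f x‖ :=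
    integral_nonneg (fun x => mul_nonneg (le_of_lt (wt_pos x)) (norm_nonneg _))
  have hIka : Integrable ((pd a)^[m] f) := prov_hIa hIk a m le_rfl
  have hDq := FI_iter_a hsm hIk a (p+ξ)
  have hDp := FI_iter_a hsm hIk a p
  have hphiD : FI (fun x => (ker ξ x - 1) * (pd a)^[m] f x) p
      = FI ((pd a)^[m] f) (p+ξ) - FI ((pd a)^[m] f) p := FI_phi _ hIka p ξ
  have alg : (-(Complex.I * (p a : ℝ)))^m * (FI f (p+ξ) - FI f p)
      = ((-(Complex.I * (p a : ℝ)))^m - (-(Complex.I * ((p+ξ) a : ℝ)))^m) * FI f (p+ξ)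
        + FI (fun x => (ker ξ x - 1) * (pd a)^[m] f x) p := by
    rw [hphiD, hDq, hDp]
    ring
  have habs1 : |p a|^m * ‖FI f (p+ξ) - FI f p‖
      ≤ ‖(-(Complex.I * (p a : ℝ)))^m - (-(Complex.I * ((p+ξ) a : ℝ)))^m‖
          * ‖FI f (p+ξ)‖
        + ‖FI (fun x => (ker ξ x - 1) * (pd a)^[m] f x) p‖ := by
    have e1 : |p a|^m * ‖FI f (p+ξ) - FI f p‖
        = ‖(-(Complex.I * (p a : ℝ)))^m * (FI f (p+ξ) - FI f p)‖ := by
      rw [norm_mul, norm_pow, norm_neg, norm_mul, Complex.norm_I, one_mul,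
        Complex.norm_real, Real.norm_eq_abs]
    rw [e1, alg]
    refine (norm_add_le _ _).trans ?_
    rw [norm_mul]
  have hdiffpow : ‖(-(Complex.I * (p a : ℝ)))^m - (-(Complex.I * ((p+ξ) a : ℝ)))^m‖
      = |(p a)^m - ((p+ξ) a)^m| := by
    have e : ∀ c : ℝ, (-(Complex.I * (c:ℂ)))^m = (-Complex.I)^m * ((c:ℝ):ℂ)^m := by
      intro c
      rw [show (-(Complex.I * (c:ℂ))) = (-Complex.I) * (c:ℂ) by ring, mul_pow]
    rw [e (p a), e ((p+ξ) a), ← mul_sub, norm_mul, norm_pow, norm_neg, Complex.norm_I,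
      one_pow, one_mul,
      show ((p a : ℝ):ℂ)^m - (((p+ξ) a : ℝ):ℂ)^m = (((p a)^m - ((p+ξ) a)^m : ℝ) : ℂ) by
        push_cast; ring]
    exact (Complex.norm_real _).trans (Real.norm_eq_abs _)
  have hξa : |p a - (p+ξ) a| ≤ s := by
    have e : p a - (p+ξ) a = -ξ a := by simp [Pi.add_apply]
    rw [e, abs_neg, show |ξ a| = Real.sqrt ((ξ a)^2) from (Real.sqrt_sq_eq_abs _).symm, hs]
    exact Real.sqrt_le_sqrt (sq_le_sum2 ξ a)
  have hsqv1 : (1:ℝ) ≤ Real.sqrt (1 + ((p+ξ) 0)^2 + ((p+ξ) 1)^2) := by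
    have h := Real.sqrt_le_sqrt (show (1:ℝ) ≤ 1 + ((p+ξ) 0)^2 + ((p+ξ) 1)^2 by
      nlinarith [sq_nonneg ((p+ξ) 0), sq_nonneg ((p+ξ) 1)])
    rwa [Real.sqrt_one] at h
  have hqa : |(p+ξ) a| ≤ Real.sqrt (1 + ((p+ξ) 0)^2 + ((p+ξ) 1)^2) := by
    rw [show |(p+ξ) a| = Real.sqrt (((p+ξ) a)^2) from (Real.sqrt_sq_eq_abs _).symm]
    apply Real.sqrt_le_sqrt
    have := sq_le_sum2 (p+ξ) a
    linarith
  have hmax : max |p a| |(p+ξ) a| ≤ 2 * Real.sqrt (1 + ((p+ξ) 0)^2 + ((p+ξ) 1)^2) := by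
    apply max_le
    · calc |p a| = |(p+ξ) a + (p a - (p+ξ) a)| := by ring_nf
        _ ≤ |(p+ξ) a| + |p a - (p+ξ) a| := abs_add_le _ _
        _ ≤ Real.sqrt (1 + ((p+ξ) 0)^2 + ((p+ξ) 1)^2) + 1 := add_le_add hqa (hξa.trans hs1)
        _ ≤ 2 * Real.sqrt (1 + ((p+ξ) 0)^2 + ((p+ξ) 1)^2) := by linarith
    · linarith
  have hpowdiff : |(p a)^m - ((p+ξ) a)^m|
      ≤ m * (2 * Real.sqrt (1 + ((p+ξ) 0)^2 + ((p+ξ) 1)^2))^(m-1) * s := by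
    refine (abs_pow_sub_pow (p a) ((p+ξ) a) m).trans ?_
    apply mul_le_mul _ hξa (abs_nonneg _) (by positivity)
    exact mul_le_mul_of_nonneg_left (pow_le_pow_left₀ (by positivity) hmax _) (by positivity)
  have hfirst : ‖(-(Complex.I * (p a : ℝ)))^m - (-(Complex.I * ((p+ξ) a : ℝ)))^m‖
        * ‖FI f (p+ξ)‖ ≤ m * 2^m * s * CA := by
    rw [hdiffpow]
    have hkey : (2 * Real.sqrt (1 + ((p+ξ) 0)^2 + ((p+ξ) 1)^2))^(m-1)
        * ‖FI f (p+ξ)‖ ≤ 2^m * CA := by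
      have e1 : (2 * Real.sqrt (1 + ((p+ξ) 0)^2 + ((p+ξ) 1)^2))^(m-1)
          = 2^(m-1) * (Real.sqrt (1 + ((p+ξ) 0)^2 + ((p+ξ) 1)^2))^(m-1) := mul_pow _ _ _
      have e2 : (Real.sqrt (1 + ((p+ξ) 0)^2 + ((p+ξ) 1)^2))^(m-1)
          ≤ (Real.sqrt (1 + ((p+ξ) 0)^2 + ((p+ξ) 1)^2))^m := pow_le_pow_right₀ hsqv1 (by omega)
      have e3 : (Real.sqrt (1 + ((p+ξ) 0)^2 + ((p+ξ) 1)^2))^m * ‖FI f (p+ξ)‖ ≤ CA := by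
        rw [← wt_nat_eq]
        exact hdecq
      have e4 : (2:ℝ)^(m-1) ≤ 2^m := pow_le_pow_right₀ (by norm_num) (by omega)
      have hFq : (0:ℝ) ≤ ‖FI f (p+ξ)‖ := norm_nonneg _
      calc (2 * Real.sqrt (1 + ((p+ξ) 0)^2 + ((p+ξ) 1)^2))^(m-1) * ‖FI f (p+ξ)‖
          = 2^(m-1) * ((Real.sqrt (1 + ((p+ξ) 0)^2 + ((p+ξ) 1)^2))^(m-1)
              * ‖FI f (p+ξ)‖) := by rw [e1]; ring
        _ ≤ 2^m * ((Real.sqrt (1 + ((p+ξ) 0)^2 + ((p+ξ) 1)^2))^m * ‖FI f (p+ξ)‖) :=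
            mul_le_mul e4 (mul_le_mul_of_nonneg_right e2 hFq) (by positivity) (by positivity)
        _ ≤ 2^m * CA := mul_le_mul_of_nonneg_left e3 (by positivity)
    calc |(p a)^m - ((p+ξ) a)^m| * ‖FI f (p+ξ)‖
        ≤ (m * (2 * Real.sqrt (1 + ((p+ξ) 0)^2 + ((p+ξ) 1)^2))^(m-1) * s)
            * ‖FI f (p+ξ)‖ :=
          mul_le_mul_of_nonneg_right hpowdiff (norm_nonneg _)
      _ = (m * s) * ((2 * Real.sqrt (1 + ((p+ξ) 0)^2 + ((p+ξ) 1)^2))^(m-1)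
            * ‖FI f (p+ξ)‖) := by ring
      _ ≤ (m * s) * (2^m * CA) := mul_le_mul_of_nonneg_left hkey (by positivity)
      _ = m * 2^m * s * CA := by ring
  have hsecond : ‖FI (fun x => (ker ξ x - 1) * (pd a)^[m] f x) p‖
      ≤ 2 * s^α * ∫ x, wt ε x * ‖(pd a)^[m] f x‖ :=
    FI_phig_le hε hα hs1 hs0 _ (hIwa_of hIw a) p
  have hmono : m * 2^m * s * CA ≤ m * 2^m * s^α * CA := by
    apply mul_le_mul_of_nonneg_right _ hCAn
    apply mul_le_mul_of_nonneg_left hssα (by positivity)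
  calc |p a|^m * ‖FI f (p+ξ) - FI f p‖
      ≤ ‖(-(Complex.I * (p a : ℝ)))^m - (-(Complex.I * ((p+ξ) a : ℝ)))^m‖
          * ‖FI f (p+ξ)‖
        + ‖FI (fun x => (ker ξ x - 1) * (pd a)^[m] f x) p‖ := habs1
    _ ≤ m * 2^m * s * CA + 2 * s^α * ∫ x, wt ε x * ‖(pd a)^[m] f x‖ := add_le_add hfirst hsecond
    _ ≤ m * 2^m * s^α * CA + 2 * s^α * ∫ x, wt ε x * ‖(pd a)^[m] f x‖ := by linarith
    _ = s^α * (m*2^m*CA + 2*(∫ x, wt ε x * ‖(pd a)^[m] f x‖)) := by ring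

lemma FI_holder {m : ℕ} (hm : 1 ≤ m) {ε α : ℝ} (hε : 0 < ε) (hα : α = min 1 ε)
    (f : (Fin 2 → ℝ) → ℂ) (hsm : ContDiff ℝ (m:ℕ) f)
    (hIk : ∀ k : ℕ×ℕ, k.1+k.2 ≤ m → Integrable (pdk k f))
    (hIw : ∀ k : ℕ×ℕ, k.1+k.2 ≤ m → Integrable (fun x => wt ε x * ‖pdk k f x‖))
    (p ξ : Fin 2 → ℝ)
    (hs0 : 0 < Real.sqrt ((ξ 0)^2 + (ξ 1)^2)) (hs1 : Real.sqrt ((ξ 0)^2 + (ξ 1)^2) ≤ 1) :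
    wt m p * ‖FI f (p+ξ) - FI f p‖
      ≤ (Real.sqrt ((ξ 0)^2 + (ξ 1)^2))^α * (3^m * (2*(∫ x, wt ε x * ‖pdk (0,0) f x‖)
          + (m*2^m*(3^m * ((∫ x, wt ε x * ‖pdk (0,0) f x‖) + (∫ x, wt ε x * ‖pdk (m,0) f x‖)
              + (∫ x, wt ε x * ‖pdk (0,m) f x‖))) + 2*(∫ x, wt ε x * ‖pdk (m,0) f x‖))
          + (m*2^m*(3^m * ((∫ x, wt ε x * ‖pdk (0,0) f x‖) + (∫ x, wt ε x * ‖pdk (m,0) f x‖)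
              + (∫ x, wt ε x * ‖pdk (0,m) f x‖))) + 2*(∫ x, wt ε x * ‖pdk (0,m) f x‖)))) := by
  have hWnn : ∀ k : ℕ×ℕ, 0 ≤ ∫ x, wt ε x * ‖pdk k f x‖ := fun k =>
    integral_nonneg (fun x => mul_nonneg (le_of_lt (wt_pos x)) (norm_nonneg _))
  have hCAn : (0:ℝ) ≤ 3^m * ((∫ x, wt ε x * ‖pdk (0,0) f x‖) + (∫ x, wt ε x * ‖pdk (m,0) f x‖)
      + (∫ x, wt ε x * ‖pdk (0,m) f x‖)) := by
    have := hWnn (0,0); have := hWnn (m,0); have := hWnn (0,m); positivity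
  have hdecq := FI_decay hm hε f hsm hIk hIw (p+ξ)
  have hα0 : 0 < α := by rw [hα]; exact lt_min one_pos hε
  have hsα : 0 < (Real.sqrt ((ξ 0)^2 + (ξ 1)^2))^α := Real.rpow_pos_of_pos hs0 α
  have hΔ : ‖FI f (p+ξ) - FI f p‖
      ≤ 2 * (Real.sqrt ((ξ 0)^2 + (ξ 1)^2))^α * ∫ x, wt ε x * ‖pdk (0,0) f x‖ := by
    rw [← FI_phi f (hIk (0,0) (by omega)) p ξ]
    exact FI_phig_le hε hα hs1 hs0 _ (hIw (0,0) (by omega)) p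
  have h0 := axis_bound hm hε hα f hsm hIk hIw p ξ hs0 hs1 hCAn hdecq 0
  have h1 := axis_bound hm hε hα f hsm hIk hIw p ξ hs0 hs1 hCAn hdecq 1
  have e0 : (pd 0)^[m] f = pdk (m,0) f := rfl
  have e1 : (pd 1)^[m] f = pdk (0,m) f := rfl
  rw [e0] at h0
  rw [e1] at h1
  have hΔn : (0:ℝ) ≤ ‖FI f (p+ξ) - FI f p‖ := norm_nonneg _
  calc wt m p * ‖FI f (p+ξ) - FI f p‖
      ≤ (3^m * (1 + |p 0|^m + |p 1|^m)) * ‖FI f (p+ξ) - FI f p‖ :=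
        mul_le_mul_of_nonneg_right (wt_le_sum_pow m p) hΔn
    _ = 3^m * (‖FI f (p+ξ) - FI f p‖ + |p 0|^m * ‖FI f (p+ξ) - FI f p‖
          + |p 1|^m * ‖FI f (p+ξ) - FI f p‖) := by ring
    _ ≤ 3^m * ((2 * (Real.sqrt ((ξ 0)^2 + (ξ 1)^2))^α * ∫ x, wt ε x * ‖pdk (0,0) f x‖)
          + (Real.sqrt ((ξ 0)^2 + (ξ 1)^2))^α
              * (m*2^m*(3^m * ((∫ x, wt ε x * ‖pdk (0,0) f x‖) + (∫ x, wt ε x * ‖pdk (m,0) f x‖)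
                  + (∫ x, wt ε x * ‖pdk (0,m) f x‖))) + 2*(∫ x, wt ε x * ‖pdk (m,0) f x‖))
          + (Real.sqrt ((ξ 0)^2 + (ξ 1)^2))^α
              * (m*2^m*(3^m * ((∫ x, wt ε x * ‖pdk (0,0) f x‖) + (∫ x, wt ε x * ‖pdk (m,0) f x‖)
                  + (∫ x, wt ε x * ‖pdk (0,m) f x‖))) + 2*(∫ x, wt ε x * ‖pdk (0,m) f x‖))) := by
        apply mul_le_mul_of_nonneg_left _ (by positivity)
        linarith
    _ = (Real.sqrt ((ξ 0)^2 + (ξ 1)^2))^α * (3^m * (2*(∫ x, wt ε x * ‖pdk (0,0) f x‖)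
          + (m*2^m*(3^m * ((∫ x, wt ε x * ‖pdk (0,0) f x‖) + (∫ x, wt ε x * ‖pdk (m,0) f x‖)
              + (∫ x, wt ε x * ‖pdk (0,m) f x‖))) + 2*(∫ x, wt ε x * ‖pdk (m,0) f x‖))
          + (m*2^m*(3^m * ((∫ x, wt ε x * ‖pdk (0,0) f x‖) + (∫ x, wt ε x * ‖pdk (m,0) f x‖)
              + (∫ x, wt ε x * ‖pdk (0,m) f x‖))) + 2*(∫ x, wt ε x * ‖pdk (0,m) f x‖)))) := by
        ring

lemma pdk_continuous {m : ℕ} {f : (Fin 2 → ℝ) → ℂ} (hsm : ContDiff ℝ (m:ℕ) f)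
    (k : ℕ × ℕ) (hk : k.1 + k.2 ≤ m) : Continuous (pdk k f) := by
  have h2 : ContDiff ℝ ((m - k.2 : ℕ)) ((pd 1)^[k.2] f) :=
    contDiff_pd_iter 1 k.2 f (m - k.2) (by rw [show k.2 + (m - k.2) = m by omega]; exact hsm)
  have h1 : ContDiff ℝ ((0:ℕ)) (pdk k f) :=
    contDiff_pd_iter 0 k.1 _ 0 (h2.of_le (Nat.cast_le.mpr (by omega)))
  exact h1.continuous

lemma entryMax_le {n : ℕ} (hn : 1 ≤ n) (A : Matrix (Fin n) (Fin n) ℂ) {C : ℝ}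
    (h : ∀ i j, ‖A i j‖ ≤ C) : entryMax A ≤ C := by
  have : Nonempty (Fin n) := Fin.pos_iff_nonempty.mp hn
  exact ciSup_le fun i => ciSup_le fun j => h i j

/-- Weighted Sobolev regularity implies weighted Hölder regularity of the Fourier
transform: under the hypotheses, `‖V̂‖_{α,m} < ∞` with `α = min 1 ε`, i.e. both the
weighted sup and the weighted Hölder difference quotient of `V̂` are bounded. -/
theorem stmt_3 (n : ℕ) (hn : 1 ≤ n) (m : ℕ) (hm : 1 ≤ m) (ε : ℝ) (hε : 0 < ε)
    (V : (Fin 2 → ℝ) → Matrix (Fin n) (Fin n) ℂ)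
    (hsmooth : ∀ i j : Fin n, ContDiff ℝ m (fun x => V x i j))
    (hint : ∀ k : ℕ × ℕ, k.1 + k.2 ≤ m → ∀ i j : Fin n,
      Integrable (fun x : Fin 2 → ℝ =>
        ((wt ε x : ℝ) : ℂ) * pdk k (fun y => V y i j) x)) :
    ∃ C : ℝ,
      (∀ p : Fin 2 → ℝ, wt m p * entryMax (ftMat V p) ≤ C) ∧
      (∀ p ξ : Fin 2 → ℝ,
        0 < Real.sqrt ((ξ 0) ^ 2 + (ξ 1) ^ 2) →
        Real.sqrt ((ξ 0) ^ 2 + (ξ 1) ^ 2) ≤ 1 →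
        (Real.sqrt ((ξ 0) ^ 2 + (ξ 1) ^ 2)) ^ (-(min 1 ε)) *
          entryMax (fun i j =>
            ((wt m (p + ξ) : ℝ) : ℂ) * ftMat V (p + ξ) i j -
              ((wt m p : ℝ) : ℂ) * ftMat V p i j) ≤ C) := by
  have hNE : Nonempty (Fin n) := Fin.pos_iff_nonempty.mp hn
  set α := min 1 ε with hα
  -- per-entry data
  have hIw : ∀ i j : Fin n, ∀ k : ℕ×ℕ, k.1+k.2 ≤ m →
      Integrable (fun x => wt ε x * ‖pdk k (fun y => V y i j) x‖) := by
    intro i j k hk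
    refine ((hint k hk i j).norm).congr ?_
    filter_upwards with x
    rw [norm_mul, Complex.norm_real, Real.norm_eq_abs, _root_.abs_of_nonneg (le_of_lt (wt_pos x))]
  have hIk : ∀ i j : Fin n, ∀ k : ℕ×ℕ, k.1+k.2 ≤ m →
      Integrable (pdk k (fun y => V y i j)) := by
    intro i j k hk
    refine (hIw i j k hk).mono'
      ((pdk_continuous (hsmooth i j) k hk).aestronglyMeasurable) ?_
    filter_upwards with x
    exact le_mul_of_one_le_left (norm_nonneg _) (wt_one_le (le_of_lt hε) x)
  -- constants
  set W : Fin n → Fin n → ℕ×ℕ → ℝ :=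
    fun i j k => ∫ x, wt ε x * ‖pdk k (fun y => V y i j) x‖ with hW
  have hWnn : ∀ i j k, 0 ≤ W i j k := fun i j k =>
    integral_nonneg (fun x => mul_nonneg (le_of_lt (wt_pos x)) (norm_nonneg _))
  set CA : Fin n → Fin n → ℝ :=
    fun i j => 3^m * (W i j (0,0) + W i j (m,0) + W i j (0,m)) with hCA
  set CB : Fin n → Fin n → ℝ := fun i j =>
    3^m * (2*(W i j (0,0)) + (m*2^m*CA i j + 2*(W i j (m,0)))
      + (m*2^m*CA i j + 2*(W i j (0,m)))) with hCB
  have hCAnn : ∀ i j, 0 ≤ CA i j := by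
    intro i j
    have := hWnn i j (0,0); have := hWnn i j (m,0); have := hWnn i j (0,m)
    rw [hCA]; positivity
  have hCBnn : ∀ i j, 0 ≤ CB i j := by
    intro i j
    have := hWnn i j (0,0); have := hWnn i j (m,0); have := hWnn i j (0,m)
    have := hCAnn i j
    rw [hCB]; positivity
  set Hol : Fin n → Fin n → ℝ := fun i j => 2*m*6^m*CA i j + CB i j with hHol
  have hHolnn : ∀ i j, 0 ≤ Hol i j := by
    intro i j
    have := hCAnn i j; have := hCBnn i j
    rw [hHol]; positivity
  set C := ∑ i : Fin n, ∑ j : Fin n, (CA i j + Hol i j) with hC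
  have hterm : ∀ i j, CA i j + Hol i j ≤ C := by
    intro i j
    rw [hC]
    have h1 : CA i j + Hol i j ≤ ∑ j' : Fin n, (CA i j' + Hol i j') :=
      Finset.single_le_sum (f := fun j' => CA i j' + Hol i j')
        (fun j' _ => add_nonneg (hCAnn i j') (hHolnn i j')) (Finset.mem_univ j)
    refine h1.trans ?_
    exact Finset.single_le_sum (f := fun i' => ∑ j' : Fin n, (CA i' j' + Hol i' j'))
      (fun i' _ => Finset.sum_nonneg (fun j' _ => add_nonneg (hCAnn i' j') (hHolnn i' j')))
      (Finset.mem_univ i)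
  -- the constant prefactor has abs ≤ 1
  have hcabs : ‖1 / (2 * (π : ℂ)) ^ 2‖ ≤ 1 := by
    have e : (2 * (π : ℂ)) = ((2 * π : ℝ) : ℂ) := by push_cast; ring
    rw [norm_div, norm_one, norm_pow, e, Complex.norm_real, Real.norm_eq_abs,
      _root_.abs_of_pos (by positivity : (0:ℝ) < 2*π)]
    rw [div_le_one (by positivity)]
    nlinarith [Real.pi_gt_three]
  -- ftMat in terms of FI
  have hft : ∀ (p : Fin 2 → ℝ) i j,
      ftMat V p i j = (1 / (2 * (π : ℂ)) ^ 2) * FI (fun y => V y i j) p := fun p i j => rfl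
  have hftabs : ∀ (p : Fin 2 → ℝ) i j,
      ‖ftMat V p i j‖ ≤ ‖FI (fun y => V y i j) p‖ := by
    intro p i j
    rw [hft, norm_mul]
    exact mul_le_of_le_one_left (norm_nonneg _) hcabs
  have hdecay : ∀ (p : Fin 2 → ℝ) i j,
      wt m p * ‖FI (fun y => V y i j) p‖ ≤ CA i j := fun p i j =>
    FI_decay hm hε _ (hsmooth i j) (hIk i j) (hIw i j) p
  refine ⟨C, ?_, ?_⟩
  · -- part A
    intro p
    have hwp : 0 ≤ wt m p := le_of_lt (wt_pos p)
    rcases eq_or_lt_of_le hwp with h0 | h0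
    · rw [← h0, zero_mul]
      have i0 : Fin n := Classical.arbitrary _
      exact le_trans (add_nonneg (hCAnn i0 i0) (hHolnn i0 i0)) (hterm i0 i0)
    · have hB : entryMax (ftMat V p) ≤ C / wt m p := by
        apply entryMax_le hn
        intro i j
        rw [le_div_iff₀ h0, mul_comm]
        calc wt m p * ‖ftMat V p i j‖
            ≤ wt m p * ‖FI (fun y => V y i j) p‖ :=
              mul_le_mul_of_nonneg_left (hftabs p i j) hwp
          _ ≤ CA i j := hdecay p i j
          _ ≤ CA i j + Hol i j := le_add_of_nonneg_right (hHolnn i j)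
          _ ≤ C := hterm i j
      calc wt m p * entryMax (ftMat V p) ≤ wt m p * (C / wt m p) :=
            mul_le_mul_of_nonneg_left hB hwp
        _ = C := by field_simp
  · -- part B
    intro p ξ hs0 hs1
    set s := Real.sqrt ((ξ 0)^2 + (ξ 1)^2) with hs
    have hsα : 0 < s^α := Real.rpow_pos_of_pos hs0 α
    have hentry : ∀ i j, ‖((wt m (p + ξ) : ℝ) : ℂ) * ftMat V (p + ξ) i j
        - ((wt m p : ℝ) : ℂ) * ftMat V p i j‖ ≤ s^α * (CA i j + Hol i j) := by
      intro i j
      set f := fun y => V y i j with hf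
      have e1 : ((wt m (p + ξ) : ℝ) : ℂ) * ftMat V (p + ξ) i j
          - ((wt m p : ℝ) : ℂ) * ftMat V p i j
          = (1 / (2 * (π : ℂ)) ^ 2) * (((wt m (p + ξ) : ℝ) : ℂ) * FI f (p+ξ)
              - ((wt m p : ℝ) : ℂ) * FI f p) := by
        rw [hft, hft]
        ring
      have e2 : ((wt m (p + ξ) : ℝ) : ℂ) * FI f (p+ξ) - ((wt m p : ℝ) : ℂ) * FI f p
          = (((wt m (p + ξ) - wt m p : ℝ)) : ℂ) * FI f (p+ξ)
            + ((wt m p : ℝ) : ℂ) * (FI f (p+ξ) - FI f p) := by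
        push_cast
        ring
      have habs : ‖((wt m (p + ξ) : ℝ) : ℂ) * FI f (p+ξ)
          - ((wt m p : ℝ) : ℂ) * FI f p‖
          ≤ |wt m (p + ξ) - wt m p| * ‖FI f (p+ξ)‖
            + wt m p * ‖FI f (p+ξ) - FI f p‖ := by
        rw [e2]
        refine (norm_add_le _ _).trans ?_
        rw [norm_mul, norm_mul, Complex.norm_real, Complex.norm_real, Real.norm_eq_abs, Real.norm_eq_abs,
          _root_.abs_of_nonneg (le_of_lt (wt_pos p))]
      have h1 : |wt m (p + ξ) - wt m p| * ‖FI f (p+ξ)‖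
          ≤ 2*m*6^m*s * CA i j := by
        calc |wt m (p + ξ) - wt m p| * ‖FI f (p+ξ)‖
            ≤ (2*m*6^m*s * wt m (p+ξ)) * ‖FI f (p+ξ)‖ :=
              mul_le_mul_of_nonneg_right (wt_diff hm p ξ hs1) (norm_nonneg _)
          _ = (2*m*6^m*s) * (wt m (p+ξ) * ‖FI f (p+ξ)‖) := by ring
          _ ≤ (2*m*6^m*s) * CA i j := by
              apply mul_le_mul_of_nonneg_left (hdecay (p+ξ) i j) (by positivity)
      have h2 : wt m p * ‖FI f (p+ξ) - FI f p‖ ≤ s^α * CB i j :=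
        FI_holder hm hε hα _ (hsmooth i j) (hIk i j) (hIw i j) p ξ hs0 hs1
      have hssα : s ≤ s^α := by
        have hα1 : α ≤ 1 := by rw [hα]; exact min_le_left _ _
        have h := Real.rpow_le_rpow_of_exponent_ge hs0 hs1 hα1
        rwa [Real.rpow_one] at h
      have h1' : |wt m (p + ξ) - wt m p| * ‖FI f (p+ξ)‖
          ≤ s^α * (2*m*6^m*CA i j) := by
        refine h1.trans ?_
        have := hCAnn i j
        calc 2*m*6^m*s * CA i j ≤ 2*m*6^m*s^α * CA i j := by
              apply mul_le_mul_of_nonneg_right _ this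
              apply mul_le_mul_of_nonneg_left hssα (by positivity)
          _ = s^α * (2*m*6^m*CA i j) := by ring
      calc ‖((wt m (p + ξ) : ℝ) : ℂ) * ftMat V (p + ξ) i j
          - ((wt m p : ℝ) : ℂ) * ftMat V p i j‖
          = ‖1 / (2 * (π : ℂ)) ^ 2‖
            * ‖((wt m (p + ξ) : ℝ) : ℂ) * FI f (p+ξ)
              - ((wt m p : ℝ) : ℂ) * FI f p‖ := by rw [e1, norm_mul]
        _ ≤ ‖((wt m (p + ξ) : ℝ) : ℂ) * FI f (p+ξ)
              - ((wt m p : ℝ) : ℂ) * FI f p‖ :=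
            mul_le_of_le_one_left (norm_nonneg _) hcabs
        _ ≤ |wt m (p + ξ) - wt m p| * ‖FI f (p+ξ)‖
            + wt m p * ‖FI f (p+ξ) - FI f p‖ := habs
        _ ≤ s^α * (2*m*6^m*CA i j) + s^α * CB i j := add_le_add h1' h2
        _ = s^α * (Hol i j) := by rw [hHol]; ring
        _ ≤ s^α * (CA i j + Hol i j) := by
            apply mul_le_mul_of_nonneg_left _ (le_of_lt hsα)
            exact le_add_of_nonneg_left (hCAnn i j)
    have hEM : entryMax (fun i j => ((wt m (p + ξ) : ℝ) : ℂ) * ftMat V (p + ξ) i j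
        - ((wt m p : ℝ) : ℂ) * ftMat V p i j) ≤ s^α * C := by
      apply entryMax_le hn
      intro i j
      refine (hentry i j).trans ?_
      exact mul_le_mul_of_nonneg_left (hterm i j) (le_of_lt hsα)
    calc s ^ (-α) * entryMax (fun i j => ((wt m (p + ξ) : ℝ) : ℂ) * ftMat V (p + ξ) i j
        - ((wt m p : ℝ) : ℂ) * ftMat V p i j)
        ≤ s ^ (-α) * (s^α * C) := by
          apply mul_le_mul_of_nonneg_left hEM (le_of_lt (Real.rpow_pos_of_pos hs0 (-α)))
      _ = C := by
          rw [← mul_assoc, ← Real.rpow_add hs0, neg_add_cancel, Real.rpow_zero, one_mul]
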